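/- Let ({E_λ}_{λ∈Λ}, {m_{λ,λ'}}_{λ⪯λ'}) be a projective system of topological graphs over a directed set Λ, and let (E^0, E^1, d, r) be its projective limit data. Then the maps d and r are well defined, d : E^1 → E^0 is a local homeomorphism, and r : E^1 → E^0 is continuous; hence E = (E^0, E^1, d, r) is a topological graph. -/

import Mathlib

open Set Filter OnePoint

namespace TopGraphAux

/-- `E⁰_sce`: the open set of sources of a topological graph. -/
def graphSce {E0 E1 : Type*} [TopologicalSpace E0] (r : E1 → E0) : Set E0 :=
  (closure (Set.range r))ᶜ

/-- `E⁰_fin`: vertices having a neighborhood whose `r`-preimage is compact. -/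
def graphFin {E0 E1 : Type*} [TopologicalSpace E0] [TopologicalSpace E1] (r : E1 → E0) :
    Set E0 :=
  {v | ∃ V ∈ nhds v, IsCompact (r ⁻¹' V)}

/-- `E⁰_rg`: the open set of regular vertices of a topological graph. -/
def graphRg {E0 E1 : Type*} [TopologicalSpace E0] [TopologicalSpace E1] (r : E1 → E0) :
    Set E0 :=
  graphFin r \ closure (graphSce r)

/-- A factor map from the topological graph `F = (F0, F1, dF, rF)` to the topological graph
`E = (E0, E1, dE, rE)`: a pair of continuous maps between one-point compactifications sending
`∞` to `∞`, intertwining range and domain maps, and with the unique edge-lifting property. -/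
structure IsFactorMap {E0 E1 F0 F1 : Type*}
    [TopologicalSpace E0] [TopologicalSpace E1] [TopologicalSpace F0] [TopologicalSpace F1]
    (dE rE : E1 → E0) (dF rF : F1 → F0)
    (m0 : OnePoint F0 → OnePoint E0) (m1 : OnePoint F1 → OnePoint E1) : Prop where
  continuous_m0 : Continuous m0
  continuous_m1 : Continuous m1
  map_infty0 : m0 ∞ = ∞
  map_infty1 : m1 ∞ = ∞
  compat : ∀ (e : F1) (e' : E1), m1 ↑e = ↑e' →
    (↑(rE e') : OnePoint E0) = m0 ↑(rF e) ∧ (↑(dE e') : OnePoint E0) = m0 ↑(dF e)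
  lift : ∀ (e' : E1) (v : F0), (↑(dE e') : OnePoint E0) = m0 ↑v →
    ∃! e : F1, m1 ↑e = (↑e' : OnePoint E1) ∧ dF e = v

/-- Regularity of a factor map: every vertex mapping to a regular vertex receives an edge,
and all edges it receives are mapped to genuine edges. -/
def IsRegularFactorMap {E0 E1 F0 F1 : Type*}
    [TopologicalSpace E0] [TopologicalSpace E1] [TopologicalSpace F0] [TopologicalSpace F1]
    (rE : E1 → E0) (rF : F1 → F0)
    (m0 : OnePoint F0 → OnePoint E0) (m1 : OnePoint F1 → OnePoint E1) : Prop :=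
  ∀ (v : F0) (w : E0), m0 ↑v = ↑w → w ∈ graphRg rE →
    (∃ e : F1, rF e = v) ∧ ∀ e : F1, rF e = v → ∃ e' : E1, m1 ↑e = ↑e'

/-- `f` restricts to a homeomorphism from `U` onto `V`. -/
def IsHomeoOn {X Y : Type*} [TopologicalSpace X] [TopologicalSpace Y]
    (f : X → Y) (U : Set X) (V : Set Y) : Prop :=
  ∃ h : U ≃ₜ V, ∀ x : U, (h x : Y) = f (x : X)

/-- Extension of a map `A → OnePoint B` to the one-point compactification, sending `∞` to `∞`. -/
def onePointLift {A B : Type*} (f : A → OnePoint B) : OnePoint A → OnePoint B :=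
  fun x => Option.elim x ∞ f

/-- The relation identifying the copy in `S` of each point of `B ⊆ S` with the corresponding
point of `X`. -/
def glueRel {X : Type*} (S B : Set X) : (X ⊕ ↥S) → (X ⊕ ↥S) → Prop :=
  fun a b => ∃ x : ↥S, (x : X) ∈ B ∧
    ((a = Sum.inl ↑x ∧ b = Sum.inr x) ∨ (a = Sum.inr x ∧ b = Sum.inl ↑x))

/-- The space `X ⨿_B S` obtained from `X ⊔ S` by identifying the two copies of each point
of `B ⊆ S ⊆ X`. -/
def Glue (X : Type*) (S B : Set X) : Type _ := Quot (glueRel S B)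

instance {X : Type*} [TopologicalSpace X] (S B : Set X) : TopologicalSpace (Glue X S B) :=
  inferInstanceAs (TopologicalSpace (Quot _))

/-- The canonical inclusion `X → X ⨿_B S`. -/
def Glue.inl {X : Type*} {S B : Set X} (x : X) : Glue X S B := Quot.mk _ (Sum.inl x)

/-- The inclusion of the extra copy `S → X ⨿_B S`. -/
def Glue.inr {X : Type*} {S B : Set X} (x : ↥S) : Glue X S B := Quot.mk _ (Sum.inr x)

/-- The extension `d_Y` of the domain map `d` to the graph `E_Y`. -/
def glueD {E0 E1 : Type*} [TopologicalSpace E0] (d : E1 → E0) (Y : Set E0) :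
    Glue E1 (d ⁻¹' closure Y) (d ⁻¹' (closure Y \ Y)) → Glue E0 (closure Y) (closure Y \ Y) :=
  Quot.lift
    (Sum.elim (fun e => Glue.inl (d e)) (fun e => Glue.inr ⟨d e.1, e.2⟩))
    (by
      rintro a b ⟨x, hx, (⟨rfl, rfl⟩ | ⟨rfl, rfl⟩)⟩
      · exact Quot.sound ⟨⟨d x.1, x.2⟩, hx, Or.inl ⟨rfl, rfl⟩⟩
      · exact (Quot.sound ⟨⟨d x.1, x.2⟩, hx, Or.inl ⟨rfl, rfl⟩⟩).symm)

/-- The extension `r_Y` of the range map `r` to the graph `E_Y`. -/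
def glueR {E0 E1 : Type*} [TopologicalSpace E0] (d r : E1 → E0) (Y : Set E0) :
    Glue E1 (d ⁻¹' closure Y) (d ⁻¹' (closure Y \ Y)) → Glue E0 (closure Y) (closure Y \ Y) :=
  Quot.lift (Sum.elim (fun e => Glue.inl (r e)) (fun e => Glue.inl (r e.1)))
    (by rintro a b ⟨x, hx, (⟨rfl, rfl⟩ | ⟨rfl, rfl⟩)⟩ <;> rfl)

/-- The projection from the glued space back onto the original space. -/
def glueProj {X : Type*} (S B : Set X) : Glue X S B → X :=
  Quot.lift (Sum.elim id Subtype.val)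
    (by rintro a b ⟨x, hx, (⟨rfl, rfl⟩ | ⟨rfl, rfl⟩)⟩ <;> rfl)

/-- A point of the projective limit `E^i = Ẽ^i \ {∞}`: a compatible thread of points of the
one-point compactifications, not all equal to `∞`. -/
structure LimPt {Λ : Type*} [Preorder Λ] (X : Λ → Type*)
    (m : ∀ ⦃l l' : Λ⦄, l ≤ l' → OnePoint (X l') → OnePoint (X l)) where
  pt : ∀ l, OnePoint (X l)
  compat : ∀ ⦃l l' : Λ⦄ (h : l ≤ l'), m h (pt l') = pt l
  exists_ne_infty : ∃ l, pt l ≠ ∞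

instance {Λ : Type*} [Preorder Λ] (X : Λ → Type*) [∀ l, TopologicalSpace (X l)]
    (m : ∀ ⦃l l' : Λ⦄, l ≤ l' → OnePoint (X l') → OnePoint (X l)) :
    TopologicalSpace (LimPt X m) :=
  TopologicalSpace.induced LimPt.pt inferInstance

/-- Topological freeness: the set of base points of loops without entrances has empty
interior. -/
def IsTopologicallyFree {E0 E1 : Type*} [TopologicalSpace E0] (d r : E1 → E0) : Prop :=
  interior {v : E0 | ∃ (n : ℕ) (hn : 0 < n) (e : Fin n → E1),
      (∀ k : Fin n, d (e k) = r (e ⟨(k.1 + 1) % n, Nat.mod_lt _ hn⟩)) ∧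
      (∀ (k : Fin n) (e' : E1), r e' = r (e k) → e' = e k) ∧
      r (e ⟨0, hn⟩) = v} = ∅

open scoped Classical in
/-- Partial iteration of a partially defined map `σ` with domain `W`:
`sgdsIter σ n x = some y` iff `x ∈ dom (σ^n)` and `σ^n x = y`. -/
noncomputable def sgdsIter {X : Type*} {W : Set X} (σ : ↥W → X) : ℕ → X → Option X
  | 0, x => Option.some x
  | n + 1, x => if h : x ∈ W then sgdsIter σ n (σ ⟨x, h⟩) else none


section ProofAux

variable {Λ : Type*} [Preorder Λ] {X : Λ → Type*} [∀ l, TopologicalSpace (X l)]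
  {p : ∀ ⦃l l' : Λ⦄, l ≤ l' → OnePoint (X l') → OnePoint (X l)}

theorem LimPt.ext' {a b : LimPt X p} (h : a.pt = b.pt) : a = b := by
  cases a; cases b; cases h; rfl

theorem LimPt.continuous_coord (l : Λ) :
    Continuous (fun e : LimPt X p => e.pt l) :=
  (continuous_apply l).comp continuous_induced_dom

theorem LimPt.pt_ne_infty (e : LimPt X p)
    (hinf : ∀ ⦃l l' : Λ⦄ (h : l ≤ l'), p h ∞ = ∞)
    {l l' : Λ} (h : l ≤ l') (hne : e.pt l ≠ ∞) : e.pt l' ≠ ∞ :=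
  fun h' => hne (by rw [← e.compat h, h', hinf])

variable [IsDirected Λ (· ≤ ·)]

theorem limPt_diamond
    (hcomp : ∀ ⦃l l' l'' : Λ⦄ (h : l ≤ l') (h' : l' ≤ l'') (x : OnePoint (X l'')),
      p h (p h' x) = p (h.trans h') x)
    {l0 : Λ} {f : ∀ l, OnePoint (X l)}
    (hf : ∀ ⦃l l' : Λ⦄ (h0 : l0 ≤ l) (h : l ≤ l'), p h (f l') = f l)
    {μ ν ν' : Λ} (h1 : μ ≤ ν) (h2 : l0 ≤ ν) (h1' : μ ≤ ν') (h2' : l0 ≤ ν') :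
    p h1 (f ν) = p h1' (f ν') := by
  obtain ⟨ρ, hρ1, hρ2⟩ := directed_of (· ≤ ·) ν ν'
  rw [← hf h2 hρ1, ← hf h2' hρ2, hcomp, hcomp]

theorem LimPt.eq_upward (a b : LimPt X p) (l0 : Λ)
    (h : ∀ ⦃ν : Λ⦄, l0 ≤ ν → a.pt ν = b.pt ν) : a = b := by
  apply LimPt.ext'; funext μ
  obtain ⟨ν, h1, h2⟩ := directed_of (· ≤ ·) μ l0
  rw [← a.compat h1, ← b.compat h1, h h2]

/-- Extend a compatible thread defined above `l0` to a point of the projective limit. -/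
noncomputable def extendThread
    (p : ∀ ⦃l l' : Λ⦄, l ≤ l' → OnePoint (X l') → OnePoint (X l))
    (hid : ∀ (l : Λ) (h : l ≤ l) (x : OnePoint (X l)), p h x = x)
    (hcomp : ∀ ⦃l l' l'' : Λ⦄ (h : l ≤ l') (h' : l' ≤ l'') (x : OnePoint (X l'')),
      p h (p h' x) = p (h.trans h') x)
    (l0 : Λ) (f : ∀ l, OnePoint (X l))
    (hf : ∀ ⦃l l' : Λ⦄ (h0 : l0 ≤ l) (h : l ≤ l'), p h (f l') = f l)
    (hne : f l0 ≠ ∞) : LimPt X p where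
  pt μ := p (directed_of (· ≤ ·) μ l0).choose_spec.1 (f (directed_of (· ≤ ·) μ l0).choose)
  compat := by
    intro l l' h
    beta_reduce
    rw [hcomp]
    exact limPt_diamond hcomp hf _ (directed_of (· ≤ ·) l' l0).choose_spec.2 _
      (directed_of (· ≤ ·) l l0).choose_spec.2
  exists_ne_infty := ⟨l0, by
    beta_reduce
    rw [limPt_diamond hcomp hf (directed_of (· ≤ ·) l0 l0).choose_spec.1
      (directed_of (· ≤ ·) l0 l0).choose_spec.2 (le_refl l0) (le_refl l0), hid]
    exact hne⟩

theorem extendThread_pt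
    (p : ∀ ⦃l l' : Λ⦄, l ≤ l' → OnePoint (X l') → OnePoint (X l))
    (hid : ∀ (l : Λ) (h : l ≤ l) (x : OnePoint (X l)), p h x = x)
    (hcomp : ∀ ⦃l l' l'' : Λ⦄ (h : l ≤ l') (h' : l' ≤ l'') (x : OnePoint (X l'')),
      p h (p h' x) = p (h.trans h') x)
    (l0 : Λ) (f : ∀ l, OnePoint (X l))
    (hf : ∀ ⦃l l' : Λ⦄ (h0 : l0 ≤ l) (h : l ≤ l'), p h (f l') = f l)
    (hne : f l0 ≠ ∞) {μ ν : Λ} (h1 : μ ≤ ν) (h2 : l0 ≤ ν) :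
    (extendThread p hid hcomp l0 f hf hne).pt μ = p h1 (f ν) :=
  limPt_diamond hcomp hf (directed_of (· ≤ ·) μ l0).choose_spec.1
    (directed_of (· ≤ ·) μ l0).choose_spec.2 h1 h2

theorem extendThread_pt_of_le
    (p : ∀ ⦃l l' : Λ⦄, l ≤ l' → OnePoint (X l') → OnePoint (X l))
    (hid : ∀ (l : Λ) (h : l ≤ l) (x : OnePoint (X l)), p h x = x)
    (hcomp : ∀ ⦃l l' l'' : Λ⦄ (h : l ≤ l') (h' : l' ≤ l'') (x : OnePoint (X l'')),
      p h (p h' x) = p (h.trans h') x)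
    (l0 : Λ) (f : ∀ l, OnePoint (X l))
    (hf : ∀ ⦃l l' : Λ⦄ (h0 : l0 ≤ l) (h : l ≤ l'), p h (f l') = f l)
    (hne : f l0 ≠ ∞) {μ : Λ} (h : l0 ≤ μ) :
    (extendThread p hid hcomp l0 f hf hne).pt μ = f μ := by
  rw [extendThread_pt p hid hcomp l0 f hf hne (le_refl μ) h, hid]

/-- The projective limit of one-point compactifications, minus the point at infinity, is a
locally compact Hausdorff space. -/
theorem limPt_t2_locallyCompact {Λ : Type*} [Preorder Λ] {X : Λ → Type*}
    [∀ l, TopologicalSpace (X l)] [∀ l, T2Space (X l)] [∀ l, LocallyCompactSpace (X l)]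
    (p : ∀ ⦃l l' : Λ⦄, l ≤ l' → OnePoint (X l') → OnePoint (X l))
    (hcont : ∀ ⦃l l' : Λ⦄ (h : l ≤ l'), Continuous (p h)) :
    T2Space (LimPt X p) ∧ LocallyCompactSpace (LimPt X p) := by
  have hind : Topology.IsInducing (LimPt.pt : LimPt X p → ∀ l, OnePoint (X l)) := ⟨rfl⟩
  have hinj : Function.Injective (LimPt.pt : LimPt X p → ∀ l, OnePoint (X l)) := by
    intro a b h; exact LimPt.ext' h
  have hemb : Topology.IsEmbedding (LimPt.pt : LimPt X p → ∀ l, OnePoint (X l)) := ⟨hind, hinj⟩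
  refine ⟨hemb.t2Space, hind.locallyCompactSpace ?_⟩
  refine ⟨{g | ∃ l, g l ≠ ∞}, {g | ∀ ⦃l l' : Λ⦄ (h : l ≤ l'), p h (g l') = g l}, ?_, ?_, ?_⟩
  · have : {g : ∀ l, OnePoint (X l) | ∃ l, g l ≠ ∞} =
        ⋃ l, (fun g : ∀ l, OnePoint (X l) => g l) ⁻¹' ({∞}ᶜ) := by
      ext g; simp [Set.mem_iUnion]
    rw [this]
    exact isOpen_iUnion fun l => isOpen_compl_singleton.preimage (continuous_apply l)
  · have : {g : ∀ l, OnePoint (X l) | ∀ ⦃l l' : Λ⦄ (h : l ≤ l'), p h (g l') = g l} =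
        ⋂ (l) (l') (h : l ≤ l'), {g : ∀ l, OnePoint (X l) | p h (g l') = g l} := by
      ext g; simp only [Set.mem_iInter, Set.mem_setOf_eq]
    rw [this]
    exact isClosed_iInter fun l => isClosed_iInter fun l' => isClosed_iInter fun h =>
      isClosed_eq ((hcont h).comp (continuous_apply l')) (continuous_apply l)
  · ext g
    constructor
    · rintro ⟨e, rfl⟩
      exact ⟨e.exists_ne_infty, fun l l' h => e.compat h⟩
    · rintro ⟨hU, hZ⟩
      exact ⟨⟨g, fun l l' h => hZ h, hU⟩, rfl⟩

end ProofAux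

/-- For a projective system of topological graphs over a directed set `Λ`,
the coordinatewise maps `d` and `r` on the projective limit are well defined (exist and are
unique), `d` is a local homeomorphism and `r` is continuous; moreover the limit spaces are
locally compact Hausdorff, so the projective limit is a topological graph. -/
theorem statement9
    {Λ : Type*} [Preorder Λ] [IsDirected Λ (· ≤ ·)] [Nonempty Λ]
    {V E : Λ → Type*}
    [∀ l, TopologicalSpace (V l)] [∀ l, TopologicalSpace (E l)]
    [∀ l, T2Space (V l)] [∀ l, T2Space (E l)]
    [∀ l, LocallyCompactSpace (V l)] [∀ l, LocallyCompactSpace (E l)]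
    (d r : ∀ l, E l → V l)
    (hd : ∀ l, IsLocalHomeomorph (d l)) (hr : ∀ l, Continuous (r l))
    (p0 : ∀ ⦃l l' : Λ⦄, l ≤ l' → OnePoint (V l') → OnePoint (V l))
    (p1 : ∀ ⦃l l' : Λ⦄, l ≤ l' → OnePoint (E l') → OnePoint (E l))
    (hfac : ∀ ⦃l l' : Λ⦄ (h : l ≤ l'), IsFactorMap (d l) (r l) (d l') (r l') (p0 h) (p1 h))
    (hid0 : ∀ (l : Λ) (h : l ≤ l) (x : OnePoint (V l)), p0 h x = x)
    (hid1 : ∀ (l : Λ) (h : l ≤ l) (x : OnePoint (E l)), p1 h x = x)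
    (hcomp0 : ∀ ⦃l l' l'' : Λ⦄ (h : l ≤ l') (h' : l' ≤ l'') (x : OnePoint (V l'')),
      p0 h (p0 h' x) = p0 (h.trans h') x)
    (hcomp1 : ∀ ⦃l l' l'' : Λ⦄ (h : l ≤ l') (h' : l' ≤ l'') (x : OnePoint (E l'')),
      p1 h (p1 h' x) = p1 (h.trans h') x) :
    (∀ e : LimPt E p1, ∃! v : LimPt V p0,
        ∀ (l : Λ) (el : E l), e.pt l = ↑el → v.pt l = ↑(d l el)) ∧
      (∀ e : LimPt E p1, ∃! v : LimPt V p0,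
        ∀ (l : Λ) (el : E l), e.pt l = ↑el → v.pt l = ↑(r l el)) ∧
      (∀ dlim : LimPt E p1 → LimPt V p0,
        (∀ (e : LimPt E p1) (l : Λ) (el : E l), e.pt l = ↑el → (dlim e).pt l = ↑(d l el)) →
        IsLocalHomeomorph dlim) ∧
      (∀ rlim : LimPt E p1 → LimPt V p0,
        (∀ (e : LimPt E p1) (l : Λ) (el : E l), e.pt l = ↑el → (rlim e).pt l = ↑(r l el)) →
        Continuous rlim) ∧
      T2Space (LimPt V p0) ∧ LocallyCompactSpace (LimPt V p0) ∧
      T2Space (LimPt E p1) ∧ LocallyCompactSpace (LimPt E p1) := by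
  classical
  have hinf0 : ∀ ⦃l l' : Λ⦄ (h : l ≤ l'), p0 h ∞ = ∞ := fun l l' h => (hfac h).map_infty0
  have hinf1 : ∀ ⦃l l' : Λ⦄ (h : l ≤ l'), p1 h ∞ = ∞ := fun l l' h => (hfac h).map_infty1
  -- generic existence and uniqueness of the induced map on the limit
  have exi : ∀ (q : ∀ l, E l → V l),
      (∀ ⦃l l' : Λ⦄ (h : l ≤ l') (x' : E l') (x : E l),
        p1 h ↑x' = ↑x → (↑(q l x) : OnePoint (V l)) = p0 h ↑(q l' x')) →
      ∀ e : LimPt E p1, ∃! v : LimPt V p0,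
        ∀ (l : Λ) (el : E l), e.pt l = ↑el → v.pt l = ↑(q l el) := by
    intro q hq e
    obtain ⟨l0, hl0⟩ := e.exists_ne_infty
    set f : ∀ l, OnePoint (V l) :=
      fun l => onePointLift (fun x : E l => (↑(q l x) : OnePoint (V l))) (e.pt l) with hfdef
    have hgen : ∀ {l : Λ} (x : E l), e.pt l = ↑x → f l = ↑(q l x) := by
      intro l x hx; simp only [hfdef, hx]; rfl
    have hf : ∀ ⦃l l' : Λ⦄ (h0 : l0 ≤ l) (h : l ≤ l'), p0 h (f l') = f l := by
      intro l l' h0 h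
      obtain ⟨x, hx⟩ := ne_infty_iff_exists.mp (e.pt_ne_infty hinf1 h0 hl0)
      obtain ⟨x', hx'⟩ := ne_infty_iff_exists.mp (e.pt_ne_infty hinf1 (h0.trans h) hl0)
      have hpx : p1 h ↑x' = ↑x := by rw [hx', e.compat h, ← hx]
      rw [hgen x hx.symm, hgen x' hx'.symm]
      exact (hq h x' x hpx).symm
    have hne : f l0 ≠ ∞ := by
      obtain ⟨x0, hx0⟩ := ne_infty_iff_exists.mp hl0
      rw [hgen x0 hx0.symm]
      exact coe_ne_infty _
    refine ⟨extendThread p0 hid0 hcomp0 l0 f hf hne, ?_, ?_⟩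
    · intro l el hel
      obtain ⟨ν, h1, h2⟩ := directed_of (· ≤ ·) l l0
      rw [extendThread_pt p0 hid0 hcomp0 l0 f hf hne h1 h2]
      obtain ⟨xν, hxν⟩ := ne_infty_iff_exists.mp (e.pt_ne_infty hinf1 h2 hl0)
      have hpx : p1 h1 ↑xν = ↑el := by rw [hxν, e.compat h1, hel]
      rw [hgen xν hxν.symm]
      exact (hq h1 xν el hpx).symm
    · intro v' hv'
      apply LimPt.eq_upward v' (extendThread p0 hid0 hcomp0 l0 f hf hne) l0
      intro ν h2
      obtain ⟨xν, hxν⟩ := ne_infty_iff_exists.mp (e.pt_ne_infty hinf1 h2 hl0)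
      rw [hv' ν xν hxν.symm, extendThread_pt_of_le p0 hid0 hcomp0 l0 f hf hne h2,
        hgen xν hxν.symm]
  -- generic continuity of the induced map on the limit
  have cont : ∀ (q : ∀ l, E l → V l), (∀ l, Continuous (q l)) →
      ∀ g : LimPt E p1 → LimPt V p0,
        (∀ (e : LimPt E p1) (l : Λ) (el : E l), e.pt l = ↑el → (g e).pt l = ↑(q l el)) →
        Continuous g := by
    intro q hqc g hg
    apply continuous_induced_rng.2
    apply continuous_pi
    intro l
    rw [continuous_iff_continuousAt]
    intro e₀
    obtain ⟨l1, hl1⟩ := e₀.exists_ne_infty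
    obtain ⟨ν, hlν, hl1ν⟩ := directed_of (· ≤ ·) l l1
    have hene : e₀.pt ν ≠ ∞ := e₀.pt_ne_infty hinf1 hl1ν hl1
    obtain ⟨x₀, hx₀⟩ := ne_infty_iff_exists.mp hene
    have hθ : ContinuousAt
        (onePointLift (fun x : E ν => (↑(q ν x) : OnePoint (V ν)))) (e₀.pt ν) := by
      rw [← hx₀, OnePoint.continuousAt_coe]
      show ContinuousAt (fun x : E ν => (↑(q ν x) : OnePoint (V ν))) x₀
      exact (OnePoint.continuous_coe.comp (hqc ν)).continuousAt
    have hF : ContinuousAt (fun e : LimPt E p1 =>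
        p0 hlν (onePointLift (fun x : E ν => (↑(q ν x) : OnePoint (V ν))) (e.pt ν))) e₀ :=
      (hfac hlν).continuous_m0.continuousAt.comp
        (hθ.comp (LimPt.continuous_coord ν).continuousAt)
    refine hF.congr_of_eventuallyEq ?_
    have hUopen : IsOpen {e : LimPt E p1 | e.pt ν ≠ ∞} :=
      isOpen_compl_singleton.preimage (LimPt.continuous_coord ν)
    filter_upwards [hUopen.mem_nhds hene] with e he
    obtain ⟨x, hx⟩ := ne_infty_iff_exists.mp he
    show (g e).pt l = p0 hlν (onePointLift _ (e.pt ν))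
    rw [← hx, ← (g e).compat hlν, hg e ν x hx.symm]
    rfl
  refine ⟨exi d (fun l l' h x' x hx => ((hfac h).compat x' x hx).2),
    exi r (fun l l' h x' x hx => ((hfac h).compat x' x hx).1), ?_,
    fun rlim hrl => cont r hr rlim hrl,
    (limPt_t2_locallyCompact p0 (fun l l' h => (hfac h).continuous_m0)).1,
    (limPt_t2_locallyCompact p0 (fun l l' h => (hfac h).continuous_m0)).2,
    (limPt_t2_locallyCompact p1 (fun l l' h => (hfac h).continuous_m1)).1,
    (limPt_t2_locallyCompact p1 (fun l l' h => (hfac h).continuous_m1)).2⟩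
  -- `dlim` is a local homeomorphism
  intro dlim hdl e₀
  have hdcont : Continuous dlim := cont d (fun l => (hd l).continuous) dlim hdl
  obtain ⟨l0, hl0⟩ := e₀.exists_ne_infty
  obtain ⟨x₀, hx₀⟩ := ne_infty_iff_exists.mp hl0
  obtain ⟨φ, hx₀φ, hφ⟩ := hd l0 x₀
  -- the unique lift of an edge over a vertex, coordinatewise
  have key : ∀ (v : LimPt V p0) (ν : Λ), ∃ xo : OnePoint (E ν),
      ∀ (y : V l0), (↑y : OnePoint (V l0)) = v.pt l0 → y ∈ φ.target → ∀ (h : l0 ≤ ν),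
        (∃ xν : E ν, xo = ↑xν ∧ p1 h ↑xν = ↑(φ.symm y) ∧
          (↑(d ν xν) : OnePoint (V ν)) = v.pt ν) ∧
        (∀ z : E ν, p1 h ↑z = ↑(φ.symm y) → (↑(d ν z) : OnePoint (V ν)) = v.pt ν →
          xo = ↑z) := by
    intro v ν
    by_cases hvy : ∃ y : V l0,
        (↑y : OnePoint (V l0)) = v.pt l0 ∧ y ∈ φ.target ∧ l0 ≤ ν
    · obtain ⟨y, hy, hyt, hν⟩ := hvy
      have hvν : v.pt ν ≠ ∞ := v.pt_ne_infty hinf0 hν (hy ▸ coe_ne_infty y)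
      obtain ⟨yν, hyν⟩ := ne_infty_iff_exists.mp hvν
      have hcond : (↑(d l0 (φ.symm y)) : OnePoint (V l0)) = p0 hν ↑yν := by
        rw [hφ, φ.right_inv hyt, hy, ← v.compat hν, hyν]
      obtain ⟨xν, ⟨hp, hdx⟩, huniq⟩ := (hfac hν).lift (φ.symm y) yν hcond
      refine ⟨↑xν, ?_⟩
      intro y' hy' hyt' h'
      have hyy : y' = y := coe_injective (hy'.trans hy.symm)
      subst hyy
      constructor
      · exact ⟨xν, rfl, hp, by rw [hdx, hyν]⟩
      · intro z hz1 hz2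
        have hdz : d ν z = yν := coe_injective (hz2.trans hyν.symm)
        rw [coe_eq_coe]
        exact (huniq z ⟨hz1, hdz⟩).symm
    · exact ⟨∞, fun y hy hyt h => absurd ⟨y, hy, hyt, h⟩ hvy⟩
  choose F hF using key
  have hFf : ∀ (v : LimPt V p0) (y : V l0), (↑y : OnePoint (V l0)) = v.pt l0 →
      y ∈ φ.target → ∀ ⦃ν ν' : Λ⦄ (h0 : l0 ≤ ν) (h : ν ≤ ν'),
      p1 h (F v ν') = F v ν := by
    intro v y hy hyt ν ν' h0 h
    obtain ⟨⟨xν', hx1, hx2, hx3⟩, _⟩ := hF v ν' y hy hyt (h0.trans h)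
    obtain ⟨_, huniq⟩ := hF v ν y hy hyt h0
    have hzne : p1 h (↑xν' : OnePoint (E ν')) ≠ ∞ := by
      intro hz
      have hcc := hcomp1 h0 h (↑xν' : OnePoint (E ν'))
      rw [hz, hinf1, hx2] at hcc
      exact coe_ne_infty _ hcc.symm
    obtain ⟨w, hw⟩ := ne_infty_iff_exists.mp hzne
    have hcompat := ((hfac h).compat xν' w hw.symm).2
    have hw1 : p1 h0 (↑w : OnePoint (E ν)) = ↑(φ.symm y) := by
      rw [hw, hcomp1, hx2]
    have hw2 : (↑(d ν w) : OnePoint (V ν)) = v.pt ν := by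
      rw [hcompat, ← v.compat h, ← hx3]
    rw [hx1, ← hw]
    exact (huniq w hw1 hw2).symm
  have hFl0 : ∀ (v : LimPt V p0) (y : V l0), (↑y : OnePoint (V l0)) = v.pt l0 →
      y ∈ φ.target → F v l0 = ↑(φ.symm y) := by
    intro v y hy hyt
    obtain ⟨⟨x, hx1, hx2, _⟩, _⟩ := hF v l0 y hy hyt (le_refl l0)
    rw [hid1] at hx2
    rw [hx1, hx2]
  have hFne : ∀ (v : LimPt V p0) (y : V l0), (↑y : OnePoint (V l0)) = v.pt l0 →
      y ∈ φ.target → F v l0 ≠ ∞ := by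
    intro v y hy hyt
    rw [hFl0 v y hy hyt]
    exact coe_ne_infty _
  set ψ : LimPt V p0 → LimPt E p1 := fun v =>
    if hv : ∃ y : V l0, (↑y : OnePoint (V l0)) = v.pt l0 ∧ y ∈ φ.target then
      extendThread p1 hid1 hcomp1 l0 (F v)
        (hFf v hv.choose hv.choose_spec.1 hv.choose_spec.2)
        (hFne v hv.choose hv.choose_spec.1 hv.choose_spec.2)
    else e₀ with hψdef
  have hψpt : ∀ (v : LimPt V p0) (y : V l0), (↑y : OnePoint (V l0)) = v.pt l0 →
      y ∈ φ.target → ∀ ⦃ν : Λ⦄ (h : l0 ≤ ν), (ψ v).pt ν = F v ν := by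
    intro v y hy hyt ν h
    have hv : ∃ y : V l0, (↑y : OnePoint (V l0)) = v.pt l0 ∧ y ∈ φ.target := ⟨y, hy, hyt⟩
    simp only [hψdef, dif_pos hv]
    exact extendThread_pt_of_le p1 hid1 hcomp1 l0 (F v) _ _ h
  set Us : Set (LimPt E p1) :=
    (fun e : LimPt E p1 => e.pt l0) ⁻¹' ((fun x : E l0 => (↑x : OnePoint (E l0))) '' φ.source)
    with hUsdef
  set Ws : Set (LimPt V p0) :=
    (fun v : LimPt V p0 => v.pt l0) ⁻¹' ((fun y : V l0 => (↑y : OnePoint (V l0))) '' φ.target)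
    with hWsdef
  refine ⟨⟨⟨⟨dlim, ψ, Us, Ws, ?_, ?_, ?_, ?_⟩, ?_, ?_⟩, ?_, ?_⟩, ⟨x₀, hx₀φ, hx₀⟩, rfl⟩
  · -- map_source
    rintro e ⟨xe, hxes, hxe⟩
    replace hxe : (↑xe : OnePoint (E l0)) = e.pt l0 := hxe
    refine ⟨φ xe, φ.map_source hxes, ?_⟩
    show (↑(φ xe) : OnePoint (V l0)) = (dlim e).pt l0
    rw [hdl e l0 xe hxe.symm, hφ]
  · -- map_target
    rintro v ⟨y, hyt, hy⟩
    replace hy : (↑y : OnePoint (V l0)) = v.pt l0 := hy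
    show (ψ v).pt l0 ∈ (fun x : E l0 => (↑x : OnePoint (E l0))) '' φ.source
    rw [hψpt v y hy hyt (le_refl l0), hFl0 v y hy hyt]
    exact ⟨φ.symm y, φ.map_target hyt, rfl⟩
  · -- left_inv
    rintro e ⟨xe, hxes, hxe⟩
    replace hxe : (↑xe : OnePoint (E l0)) = e.pt l0 := hxe
    have hv1 : (↑(φ xe) : OnePoint (V l0)) = (dlim e).pt l0 := by
      rw [hdl e l0 xe hxe.symm, hφ]
    have hyt : φ xe ∈ φ.target := φ.map_source hxes
    apply LimPt.eq_upward _ _ l0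
    intro ν hν
    rw [hψpt (dlim e) (φ xe) hv1 hyt hν]
    obtain ⟨eν, heν⟩ :=
      ne_infty_iff_exists.mp (e.pt_ne_infty hinf1 hν (hxe ▸ coe_ne_infty xe))
    obtain ⟨_, huniq⟩ := hF (dlim e) ν (φ xe) hv1 hyt hν
    rw [← heν]
    refine huniq eν ?_ ?_
    · rw [φ.left_inv hxes, heν, e.compat hν, ← hxe]
    · exact (hdl e ν eν heν.symm).symm
  · -- right_inv
    rintro v ⟨y, hyt, hy⟩
    replace hy : (↑y : OnePoint (V l0)) = v.pt l0 := hy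
    apply LimPt.eq_upward _ _ l0
    intro ν hν
    obtain ⟨⟨xν, hx1, hx2, hx3⟩, _⟩ := hF v ν y hy hyt hν
    have hptν : (ψ v).pt ν = ↑xν := by rw [hψpt v y hy hyt hν, hx1]
    rw [hdl (ψ v) ν xν hptν, hx3]
  rotate_left 2
  · -- open source
    exact (isOpenEmbedding_coe.isOpenMap _ φ.open_source).preimage (LimPt.continuous_coord l0)
  · -- open target
    exact (isOpenEmbedding_coe.isOpenMap _ φ.open_target).preimage (LimPt.continuous_coord l0)
  · -- continuity of dlim on the source
    exact hdcont.continuousOn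
  · -- continuity of ψ on the target
    rw [continuousOn_iff_continuous_restrict]
    apply continuous_induced_rng.2
    apply continuous_pi
    intro μ
    obtain ⟨ν, hμν, hl0ν⟩ := directed_of (· ≤ ·) μ l0
    have hred : ∀ v : LimPt V p0, (ψ v).pt μ = p1 hμν ((ψ v).pt ν) :=
      fun v => ((ψ v).compat hμν).symm
    suffices hcont2 : Continuous fun w : Ws => (ψ (w : LimPt V p0)).pt ν by
      exact ((hfac hμν).continuous_m1.comp hcont2).congr
        fun w => (hred (w : LimPt V p0)).symm
    refine ?_
    rw [continuous_iff_continuousAt]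
    rintro ⟨v₀, hv₀⟩
    obtain ⟨y₀, hy₀t, hy₀⟩ := hv₀
    replace hy₀ : (↑y₀ : OnePoint (V l0)) = v₀.pt l0 := hy₀
    obtain ⟨⟨xb, hxb1, hxb2, hxb3⟩, _⟩ := hF v₀ ν y₀ hy₀ hy₀t hl0ν
    obtain ⟨χ, hxbchi, hχ⟩ := hd ν xb
    set G : LimPt V p0 → OnePoint (E ν) := fun v =>
      onePointLift (fun yν : V ν => (↑(χ.symm yν) : OnePoint (E ν))) (v.pt ν) with hGdef
    have hv₀ν : v₀.pt ν = ↑(χ xb) := by rw [← hxb3, hχ]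
    have hGv₀ : G v₀ = ↑xb := by
      simp only [hGdef, hv₀ν]
      show (↑(χ.symm (χ xb)) : OnePoint (E ν)) = ↑xb
      rw [χ.left_inv hxbchi]
    have hGcont : ContinuousAt G v₀ := by
      have h1 : ContinuousAt
          (onePointLift (fun yν : V ν => (↑(χ.symm yν) : OnePoint (E ν)))) (v₀.pt ν) := by
        rw [hv₀ν, OnePoint.continuousAt_coe]
        show ContinuousAt (fun yν : V ν => (↑(χ.symm yν) : OnePoint (E ν))) (χ xb)
        have hmem : χ xb ∈ χ.symm.source := by
          rw [OpenPartialHomeomorph.symm_source]; exact χ.map_source hxbchi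
        exact OnePoint.continuous_coe.continuousAt.comp (χ.symm.continuousAt hmem)
      exact h1.comp (LimPt.continuous_coord ν).continuousAt
    set H : LimPt V p0 → OnePoint (E l0) := fun v => p1 hl0ν (G v) with hHdef
    have hHcont : ContinuousAt H v₀ := (hfac hl0ν).continuous_m1.continuousAt.comp hGcont
    have hHv₀ : H v₀ = ↑(φ.symm y₀) := by
      simp only [hHdef]
      rw [hGv₀, hxb2]
    have hN1 : {v : LimPt V p0 |
        v.pt ν ∈ (fun yν : V ν => (↑yν : OnePoint (V ν))) '' χ.target} ∈ nhds v₀ := by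
      apply (((isOpenEmbedding_coe.isOpenMap) _ χ.open_target).preimage
        (LimPt.continuous_coord ν)).mem_nhds
      exact ⟨χ xb, χ.map_source hxbchi, hv₀ν.symm⟩
    have hN2 : {v : LimPt V p0 |
        H v ∈ (fun x : E l0 => (↑x : OnePoint (E l0))) '' φ.source} ∈ nhds v₀ :=
      hHcont.preimage_mem_nhds ((isOpenEmbedding_coe.isOpenMap _ φ.open_source).mem_nhds
        ⟨φ.symm y₀, φ.map_target hy₀t, hHv₀.symm⟩)
    have hclaim : ∀ v : LimPt V p0, v ∈ Ws →
        v.pt ν ∈ (fun yν : V ν => (↑yν : OnePoint (V ν))) '' χ.target →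
        H v ∈ (fun x : E l0 => (↑x : OnePoint (E l0))) '' φ.source →
        (ψ v).pt ν = G v := by
      rintro v ⟨y, hyt, hy⟩ ⟨yν, hyνt, hyν⟩ ⟨w, hws, hw⟩
      replace hy : (↑y : OnePoint (V l0)) = v.pt l0 := hy
      replace hyν : (↑yν : OnePoint (V ν)) = v.pt ν := hyν
      replace hw : (↑w : OnePoint (E l0)) = H v := hw
      have hGv : G v = ↑(χ.symm yν) := by
        simp only [hGdef, ← hyν]; rfl
      have hzd : (↑(d ν (χ.symm yν)) : OnePoint (V ν)) = v.pt ν := by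
        rw [hχ, χ.right_inv hyνt, hyν]
      have hHv : H v = p1 hl0ν (↑(χ.symm yν) : OnePoint (E ν)) := by
        simp only [hHdef]; rw [hGv]
      have hpzw : p1 hl0ν (↑(χ.symm yν) : OnePoint (E ν)) = ↑w := by
        rw [← hHv, ← hw]
      have hcpt := ((hfac hl0ν).compat (χ.symm yν) w hpzw).2
      have hdw : (↑(d l0 w) : OnePoint (V l0)) = ↑y := by
        rw [hcpt, hzd, v.compat hl0ν, ← hy]
      have hφw : φ w = y := by
        rw [← hφ]; exact coe_eq_coe.mp hdw
      have hweq : w = φ.symm y := by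
        rw [← hφw]; exact (φ.left_inv hws).symm
      obtain ⟨_, huniq⟩ := hF v ν y hy hyt hl0ν
      rw [hψpt v y hy hyt hl0ν, hGv]
      exact huniq (χ.symm yν) (by rw [hpzw, hweq]) hzd
    have hsub : ContinuousAt (fun w : Ws => G (w : LimPt V p0)) ⟨v₀, ⟨y₀, hy₀t, hy₀⟩⟩ :=
      hGcont.comp (g := G) continuous_subtype_val.continuousAt
    refine hsub.congr_of_eventuallyEq ?_
    have hmemN : (Subtype.val ⁻¹'
        ({v : LimPt V p0 | v.pt ν ∈ (fun yν : V ν => (↑yν : OnePoint (V ν))) '' χ.target} ∩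
          {v : LimPt V p0 | H v ∈ (fun x : E l0 => (↑x : OnePoint (E l0))) '' φ.source}) :
          Set Ws) ∈ nhds (⟨v₀, ⟨y₀, hy₀t, hy₀⟩⟩ : Ws) :=
      continuous_subtype_val.continuousAt.preimage_mem_nhds (Filter.inter_mem hN1 hN2)
    filter_upwards [hmemN] with w hwN
    exact hclaim (w : LimPt V p0) w.2 hwN.1 hwN.2

end TopGraphAux
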